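/- Let G be a finite group acting transitively on a finite set Ω, let α ∈ Ω with stabilizer H = G_α, and suppose H contains a quasi-semiregular element of order p^i for some prime p and i ≥ 1. If S is a Sylow p-subgroup of G with S ≤ H, then N_G(S) ≤ N_G(H); moreover, if N_G(H) = H, then N_G(S) = N_H(S), where N_H(S) = N_G(S) ∩ H. -/

import Mathlib

open Subgroup

/-- An element `x` of a group `G` acting on `Ω` is *quasi-semiregular* if the cyclic group
`⟨x⟩` has a unique fixed point on `Ω` and acts semiregularly on the remaining points. -/
def IsQuasiSemiregular (G : Type*) [Group G] (Ω : Type*) [MulAction G Ω] (x : G) : Prop :=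
  ∃ α : Ω, (∀ β : Ω, x • β = β ↔ β = α) ∧
    ∀ (n : ℤ) (β : Ω), β ≠ α → x ^ n • β = β → ∀ γ : Ω, x ^ n • γ = γ

theorem stmt3 {G Ω : Type*} [Group G] [Finite G] [Finite Ω] [MulAction G Ω]
    (htrans : MulAction.IsPretransitive G Ω) (α : Ω)
    (H : Subgroup G) (hH : H = MulAction.stabilizer G α)
    (p : ℕ) (hp : p.Prime) (x : G) (hxH : x ∈ H) (i : ℕ) (hi : 1 ≤ i)
    (hord : orderOf x = p ^ i) (hx : IsQuasiSemiregular G Ω x)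
    (S : Sylow p G) (hSH : (S : Subgroup G) ≤ H) :
    Subgroup.normalizer ((S : Subgroup G) : Set G) ≤ Subgroup.normalizer (H : Set G) ∧
      (Subgroup.normalizer (H : Set G) = H →
        Subgroup.normalizer ((S : Subgroup G) : Set G) = Subgroup.normalizer ((S : Subgroup G) : Set G) ⊓ H) := by
  have hfact : Fact p.Prime := ⟨hp⟩
  -- x fixes α and only α
  obtain ⟨α₀, hfix, -⟩ := hx
  have hxα : x • α = α := by rw [hH] at hxH; exact hxH
  have hα₀ : α₀ = α := ((hfix α).mp hxα).symm
  rw [hα₀] at hfix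
  -- conjugate x into S by an element of H
  set x' : H := ⟨x, hxH⟩ with hx'
  have hord' : Nat.card (Subgroup.zpowers x') = p ^ i := by
    rw [Nat.card_zpowers, ← hord]
    exact (orderOf_injective H.subtype Subtype.coe_injective x').symm
  have hP : IsPGroup p (Subgroup.zpowers x') := IsPGroup.of_card hord'
  obtain ⟨Q, hQ⟩ := hP.exists_le_sylow
  obtain ⟨h, hh⟩ := MulAction.exists_smul_eq H Q (S.subtype hSH)
  have hxQ : x' ∈ Q := hQ (Subgroup.mem_zpowers x')
  have hmem : h * x' * h⁻¹ ∈ ((S.subtype hSH : Sylow p H) : Subgroup H) := by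
    rw [← hh, Sylow.coe_subgroup_smul]
    simpa using Subgroup.smul_mem_pointwise_smul x' (MulAut.conj h) (Q : Subgroup H) hxQ
  rw [Sylow.coe_subtype, Subgroup.mem_subgroupOf] at hmem
  -- y := h x h⁻¹ ∈ S, quasi-semiregular with unique fixed point α
  set y : G := (h : G) * x * (h : G)⁻¹ with hy
  have hyS : y ∈ (S : Subgroup G) := hmem
  have hhα : (h : G) • α = α := by
    have : (h : G) ∈ MulAction.stabilizer G α := by rw [← hH]; exact h.2
    exact this
  have conjfix : ∀ (g : G) (β : Ω), (g * x * g⁻¹) • β = β ↔ β = g • α := by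
    intro g β
    rw [mul_smul, mul_smul, smul_eq_iff_eq_inv_smul, hfix, inv_smul_eq_iff]
  have key : Subgroup.normalizer ((S : Subgroup G) : Set G) ≤ H := by
    intro g hg
    have hz : g * y * g⁻¹ ∈ (S : Subgroup G) :=
      (Subgroup.mem_normalizer_iff.mp hg y).mp hyS
    have hzα : (g * y * g⁻¹) • α = α := by
      have := hSH hz; rw [hH] at this; exact this
    have heq : g * y * g⁻¹ = (g * ↑h) * x * (g * ↑h)⁻¹ := by rw [hy]; group
    rw [heq, conjfix] at hzα
    have hgα : g • α = α := by
      rw [mul_smul, hhα] at hzα; exact hzα.symm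
    rw [hH]; exact hgα
  refine ⟨fun g hg => Subgroup.le_normalizer (key hg), fun _ => ?_⟩
  exact le_antisymm (le_inf le_rfl key) inf_le_left
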